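/- Let s ∈ ℤ^ℕ be exponentially bounded, and let r¹ ≠ r² be two addresses in ℤ^ℕ whose itineraries with respect to s are defined and coincide. Then neither r¹ nor r² is fast. -/

import Mathlib

open Set Filter Topology OnePoint

noncomputable section

/-- The space of external addresses: integer sequences `s₀ s₁ s₂ …`. -/
abbrev Addr : Type := ℕ → ℤ

/-- The one-sided shift on external addresses. -/
def shift (s : Addr) : Addr := fun n => s (n + 1)

/-- The model map `𝓕(t, s) = (F(t) − 2π|s₁|, σ(s))`, where `F(t) = eᵗ − 1`. -/
def Fmodel : ℝ × Addr → ℝ × Addr :=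
  fun x => (Real.exp x.1 - 1 - 2 * Real.pi * |(x.2 1 : ℝ)|, shift x.2)

/-- The model Julia set `J(𝓕)`: points whose forward orbit stays in `[0,∞) × ℤ^ℕ`. -/
def JF : Set (ℝ × Addr) := {x | ∀ n : ℕ, 0 ≤ (Fmodel^[n] x).1}

/-- The model escaping set `I(𝓕)`. -/
def IF : Set (ℝ × Addr) :=
  {x | x ∈ JF ∧ Tendsto (fun n => (Fmodel^[n] x).1) atTop atTop}

/-- An address `s` is exponentially bounded if `(t, s) ∈ J(𝓕)` for some `t`. -/
def ExpBounded (s : Addr) : Prop := ∃ t : ℝ, (t, s) ∈ JF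

/-- The minimal potential `t_s = min {t ≥ 0 : (t, s) ∈ J(𝓕)}` of an address `s`. -/
def tmin (s : Addr) : ℝ := sInf {t | (t, s) ∈ JF}

/-- An exponentially bounded address `s` is fast if the endpoint `(t_s, s)` escapes. -/
def Fast (s : Addr) : Prop := ExpBounded s ∧ (tmin s, s) ∈ IF

/-- The set `Ẽ(𝓕)` of escaping endpoints of the model: the points `(t_s, s)` for fast `s`. -/
def escEndF : Set (ℝ × Addr) := {x | ∃ s : Addr, Fast s ∧ x = (tmin s, s)}

/-- The inverse `F⁻¹(t) = log(1 + t)` of `F(t) = eᵗ − 1`. -/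
def Finv (t : ℝ) : ℝ := Real.log (1 + t)

/-- Strict lexicographic order on external addresses. -/
def lexLt (a b : Addr) : Prop := ∃ n : ℕ, (∀ m : ℕ, m < n → a m = b m) ∧ a n < b n

/-- Prepend an integer entry to an address: `m·s = m s₀ s₁ s₂ …`. -/
def consAddr (m : ℤ) (s : Addr) : Addr := fun n => match n with
  | 0 => m
  | Nat.succ k => s k

/-- The itinerary of `r` with respect to `s` is defined and equals `m`:
`m_j·s < σʲ(r) < (m_j + 1)·s` in lexicographic order for all `j ≥ 0`. -/
def HasItinerary (s r m : Addr) : Prop :=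
  ∀ j : ℕ, lexLt (consAddr (m j) s) (shift^[j] r) ∧ lexLt (shift^[j] r) (consAddr (m j + 1) s)

-- ############ auxiliary lemmas ############

lemma shift_iter : ∀ (j : ℕ) (r : Addr) (n : ℕ), shift^[j] r n = r (n + j) := by
  intro j
  induction j with
  | zero => intro r n; rfl
  | succ k ih =>
    intro r n
    rw [Function.iterate_succ_apply]
    rw [ih (shift r) n]
    rfl

lemma lexLt_asymm {a b : Addr} (h : lexLt a b) (h' : lexLt b a) : False := by
  obtain ⟨n, hn, hlt⟩ := h
  obtain ⟨n', hn', hlt'⟩ := h'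
  rcases lt_trichotomy n n' with hc | rfl | hc
  · exact absurd (hn' n hc).symm (ne_of_lt hlt)
  · exact absurd (hlt.trans hlt') (lt_irrefl _)
  · exact absurd (hn n' hc).symm (ne_of_lt hlt')

lemma lexLt_head {a b : Addr} (h : lexLt a b) : a 0 ≤ b 0 := by
  obtain ⟨n, hn, hlt⟩ := h
  cases n with
  | zero => exact le_of_lt hlt
  | succ k => exact le_of_eq (hn 0 (Nat.succ_pos k))

lemma lexLt_tail {a b : Addr} (h : lexLt a b) (h0 : a 0 = b 0) : lexLt (shift a) (shift b) := by
  obtain ⟨n, hn, hlt⟩ := h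
  cases n with
  | zero => exact absurd h0 (ne_of_lt hlt)
  | succ k => exact ⟨k, fun i hi => hn (i + 1) (by omega), hlt⟩

lemma shift_consAddr (m : ℤ) (s : Addr) : shift (consAddr m s) = s := rfl

lemma consAddr_zero (m : ℤ) (s : Addr) : consAddr m s 0 = m := rfl

lemma cons_lt_tail {m : ℤ} {s r : Addr} (h : lexLt (consAddr m s) r) (h0 : r 0 = m) :
    lexLt s (shift r) := by
  have := lexLt_tail h (by rw [consAddr_zero, h0])
  rwa [shift_consAddr] at this

lemma lt_cons_tail {m : ℤ} {s r : Addr} (h : lexLt r (consAddr m s)) (h0 : r 0 = m) :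
    lexLt (shift r) s := by
  have := lexLt_tail h (by rw [consAddr_zero, h0])
  rwa [shift_consAddr] at this

lemma itin_mem {s r m : Addr} (h : HasItinerary s r m) (k : ℕ) :
    m k ≤ r k ∧ r k ≤ m k + 1 := by
  obtain ⟨hl, hr⟩ := h k
  have e : (shift^[k] r) 0 = r k := by rw [shift_iter]; rw [Nat.zero_add]
  constructor
  · have := lexLt_head hl; rwa [consAddr_zero, e] at this
  · have := lexLt_head hr; rwa [consAddr_zero, e] at this


/-- `σ^p s` lies strictly (lex) between `σ^q r1` and `σ^q r2` (in one of the two orders). -/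
def Strad (s r1 r2 : Addr) (q p : ℕ) : Prop :=
  (lexLt (shift^[q] r1) (shift^[p] s) ∧ lexLt (shift^[p] s) (shift^[q] r2)) ∨
  (lexLt (shift^[q] r2) (shift^[p] s) ∧ lexLt (shift^[p] s) (shift^[q] r1))

lemma head_q {r : Addr} (q : ℕ) : (shift^[q] r) 0 = r q := by
  rw [shift_iter]; rw [Nat.zero_add]

/-- Oriented key step. -/
lemma key_step {s ra rb m : Addr} (ha : HasItinerary s ra m) (hb : HasItinerary s rb m)
    {q p : ℕ} (hA : lexLt (shift^[q] ra) (shift^[p] s)) (hB : lexLt (shift^[p] s) (shift^[q] rb)) :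
    (ra q ≤ s p ∧ s p ≤ rb q) ∧
    (ra q = rb q → lexLt (shift^[q+1] ra) (shift^[p+1] s) ∧ lexLt (shift^[p+1] s) (shift^[q+1] rb)) ∧
    (ra q ≠ rb q → lexLt (shift^[q+1] rb) s ∧ lexLt s (shift^[q+1] ra)) := by
  have h1 : ra q ≤ s p := by
    have := lexLt_head hA; rwa [head_q, head_q] at this
  have h2 : s p ≤ rb q := by
    have := lexLt_head hB; rwa [head_q, head_q] at this
  have hma := itin_mem ha q
  have hmb := itin_mem hb q
  refine ⟨⟨h1, h2⟩, ?_, ?_⟩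
  · intro he
    have e1 : ra q = s p := le_antisymm h1 (he ▸ h2)
    have e2 : s p = rb q := by omega
    have tA := lexLt_tail hA (by rw [head_q, head_q]; exact e1)
    have tB := lexLt_tail hB (by rw [head_q, head_q]; exact e2)
    rw [← Function.iterate_succ_apply' shift q, ← Function.iterate_succ_apply' shift p] at tA tB
    exact ⟨tA, tB⟩
  · intro hne
    have ea : ra q = m q := by omega
    have eb : rb q = m q + 1 := by omega
    have tA : lexLt s (shift (shift^[q] ra)) :=
      cons_lt_tail (ha q).1 (by rw [head_q]; exact ea)
    have tB : lexLt (shift (shift^[q] rb)) s :=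
      lt_cons_tail (hb q).2 (by rw [head_q]; exact eb)
    rw [← Function.iterate_succ_apply' shift q] at tA tB
    exact ⟨tB, tA⟩

lemma strad_step {s r1 r2 m : Addr} (h1 : HasItinerary s r1 m) (h2 : HasItinerary s r2 m)
    {q p : ℕ} (h : Strad s r1 r2 q p) :
    (m q ≤ s p ∧ s p ≤ m q + 1) ∧
    ((r1 q = r2 q ∧ Strad s r1 r2 (q+1) (p+1)) ∨ (r1 q ≠ r2 q ∧ Strad s r1 r2 (q+1) 0)) := by
  have hm1 := itin_mem h1 q
  have hm2 := itin_mem h2 q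
  cases h with
  | inl hor =>
    obtain ⟨⟨hx1, hx2⟩, heq, hne⟩ := key_step h1 h2 hor.1 hor.2
    refine ⟨by omega, ?_⟩
    by_cases hc : r1 q = r2 q
    · exact Or.inl ⟨hc, Or.inl (heq hc)⟩
    · obtain ⟨u, v⟩ := hne hc
      exact Or.inr ⟨hc, Or.inr ⟨u, v⟩⟩
  | inr hor =>
    obtain ⟨⟨hx1, hx2⟩, heq, hne⟩ := key_step h2 h1 hor.1 hor.2
    refine ⟨by omega, ?_⟩
    by_cases hc : r1 q = r2 q
    · exact Or.inl ⟨hc, Or.inr (heq hc.symm)⟩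
    · obtain ⟨u, v⟩ := hne (Ne.symm hc)
      exact Or.inr ⟨hc, Or.inl ⟨u, v⟩⟩

lemma strad_entry {s r1 r2 m : Addr} (h1 : HasItinerary s r1 m) (h2 : HasItinerary s r2 m)
    {q p : ℕ} (h : Strad s r1 r2 q p) :
    |r1 q - s p| ≤ 1 ∧ |r2 q - s p| ≤ 1 := by
  have hsb := (strad_step h1 h2 h).1
  have b1 := itin_mem h1 q
  have b2 := itin_mem h2 q
  constructor <;> rw [abs_le] <;> omega

lemma strad_base {s r1 r2 m : Addr} (h1 : HasItinerary s r1 m) (h2 : HasItinerary s r2 m)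
    (hne : r1 ≠ r2) : ∃ j : ℕ, Strad s r1 r2 (j+1) 0 := by
  obtain ⟨j, hj⟩ : ∃ j, r1 j ≠ r2 j := by
    by_contra hc; push_neg at hc; exact hne (funext hc)
  have b1 := itin_mem h1 j
  have b2 := itin_mem h2 j
  refine ⟨j, ?_⟩
  rcases lt_or_gt_of_ne hj with hlt | hlt
  · -- r1 j = m j, r2 j = m j + 1
    have e1 : r1 j = m j := by omega
    have e2 : r2 j = m j + 1 := by omega
    have tA : lexLt s (shift (shift^[j] r1)) := cons_lt_tail (h1 j).1 (by rw [head_q]; exact e1)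
    have tB : lexLt (shift (shift^[j] r2)) s := lt_cons_tail (h2 j).2 (by rw [head_q]; exact e2)
    rw [← Function.iterate_succ_apply' shift j] at tA tB
    exact Or.inr ⟨tB, tA⟩
  · have e1 : r1 j = m j + 1 := by omega
    have e2 : r2 j = m j := by omega
    have tA : lexLt s (shift (shift^[j] r2)) := cons_lt_tail (h2 j).1 (by rw [head_q]; exact e2)
    have tB : lexLt (shift (shift^[j] r1)) s := lt_cons_tail (h1 j).2 (by rw [head_q]; exact e1)
    rw [← Function.iterate_succ_apply' shift j] at tA tB
    exact Or.inl ⟨tB, tA⟩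

lemma strad_next_reset {s r1 r2 m : Addr} (h1 : HasItinerary s r1 m) (h2 : HasItinerary s r2 m)
    {q p : ℕ} (h : Strad s r1 r2 q p) : ∃ q', q < q' ∧ Strad s r1 r2 q' 0 := by
  have hex : ∃ n, r1 (q + n) ≠ r2 (q + n) := by
    by_contra hc
    push_neg at hc
    have heq : shift^[q] r1 = shift^[q] r2 := by
      funext n
      rw [shift_iter, shift_iter]
      rw [Nat.add_comm n q]
      exact hc n
    cases h with
    | inl hor => rw [heq] at hor; exact lexLt_asymm hor.1 hor.2
    | inr hor => rw [heq] at hor; exact lexLt_asymm hor.1 hor.2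
  set n := Nat.find hex with hn_def
  have hmin : ∀ i, i < n → r1 (q + i) = r2 (q + i) := fun i hi =>
    not_not.mp (Nat.find_min hex hi)
  have hchain : ∀ k, k ≤ n → Strad s r1 r2 (q + k) (p + k) := by
    intro k
    induction k with
    | zero => intro _; simpa using h
    | succ i ih =>
      intro hk
      have hS := ih (by omega)
      rcases (strad_step h1 h2 hS).2 with ⟨_, hS'⟩ | ⟨hne', _⟩
      · have : q + (i + 1) = (q + i) + 1 := by omega
        rw [this]
        have : p + (i + 1) = (p + i) + 1 := by omega
        rw [this]
        exact hS'
      · exact absurd (hmin i (by omega)) hne'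
  have hS := hchain n le_rfl
  rcases (strad_step h1 h2 hS).2 with ⟨he, _⟩ | ⟨_, hS'⟩
  · exact absurd he (Nat.find_spec hex)
  · exact ⟨q + n + 1, by omega, hS'⟩

lemma resets_unbounded {s r1 r2 m : Addr} (h1 : HasItinerary s r1 m) (h2 : HasItinerary s r2 m)
    (hne : r1 ≠ r2) : ∀ N : ℕ, ∃ q, N ≤ q ∧ Strad s r1 r2 q 0 := by
  intro N
  induction N with
  | zero =>
    obtain ⟨j, hj⟩ := strad_base h1 h2 hne
    exact ⟨j + 1, Nat.zero_le _, hj⟩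
  | succ k ih =>
    obtain ⟨q, hq, hS⟩ := ih
    obtain ⟨q', hlt, hS'⟩ := strad_next_reset h1 h2 hS
    exact ⟨q', by omega, hS'⟩

/-- The offset function along the orbit, starting from a reset. -/
def Pfun (r1 r2 : Addr) (q₀ : ℕ) : ℕ → ℕ
  | 0 => 0
  | n + 1 => if r1 (q₀ + n) = r2 (q₀ + n) then Pfun r1 r2 q₀ n + 1 else 0

lemma Pfun_step (r1 r2 : Addr) (q₀ n : ℕ) :
    Pfun r1 r2 q₀ (n + 1) = Pfun r1 r2 q₀ n + 1 ∨ Pfun r1 r2 q₀ (n + 1) = 0 := by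
  rw [Pfun]
  split <;> simp

lemma Pfun_strad {s r1 r2 m : Addr} (h1 : HasItinerary s r1 m) (h2 : HasItinerary s r2 m)
    {q₀ : ℕ} (h0 : Strad s r1 r2 q₀ 0) :
    ∀ n, Strad s r1 r2 (q₀ + n) (Pfun r1 r2 q₀ n) := by
  intro n
  induction n with
  | zero => simpa [Pfun] using h0
  | succ k ih =>
    rcases (strad_step h1 h2 ih).2 with ⟨he, hS⟩ | ⟨hne', hS⟩
    · rw [Pfun, if_pos he]
      have e : q₀ + (k + 1) = (q₀ + k) + 1 := by omega
      rw [e]; exact hS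
    · rw [Pfun, if_neg hne']
      have e : q₀ + (k + 1) = (q₀ + k) + 1 := by omega
      rw [e]; exact hS


-- ############ orbit / JF lemmas ############

lemma orbit_snd (x : ℝ × Addr) (n : ℕ) : (Fmodel^[n] x).2 = shift^[n] x.2 := by
  induction n with
  | zero => rfl
  | succ k ih =>
    rw [Function.iterate_succ_apply', Function.iterate_succ_apply']
    show shift (Fmodel^[k] x).2 = _
    rw [ih]

lemma orbit_fst_succ (x : ℝ × Addr) (n : ℕ) :
    (Fmodel^[n+1] x).1
      = Real.exp (Fmodel^[n] x).1 - 1 - 2 * Real.pi * |(x.2 (1 + n) : ℝ)| := by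
  rw [Function.iterate_succ_apply']
  show Real.exp (Fmodel^[n] x).1 - 1 - 2 * Real.pi * |((Fmodel^[n] x).2 1 : ℝ)| = _
  rw [orbit_snd, shift_iter]

lemma jf_fst_nonneg {t : ℝ} {a : Addr} (h : (t, a) ∈ JF) : 0 ≤ t := by
  have := h 0
  simpa using this

lemma jf_pull {u : ℝ} {r : Addr} (h : (u, shift r) ∈ JF) :
    (Real.log (1 + (u + 2 * Real.pi * |(r 1 : ℝ)|)), r) ∈ JF := by
  have hu : 0 ≤ u := jf_fst_nonneg h
  have hc : 0 ≤ 2 * Real.pi * |(r 1 : ℝ)| := by positivity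
  have hpos : 0 < 1 + (u + 2 * Real.pi * |(r 1 : ℝ)|) := by linarith
  have key : Fmodel (Real.log (1 + (u + 2 * Real.pi * |(r 1 : ℝ)|)), r) = (u, shift r) := by
    show (Real.exp (Real.log _) - 1 - 2 * Real.pi * |(r 1 : ℝ)|, shift r) = _
    rw [Real.exp_log hpos]
    refine Prod.ext ?_ rfl
    show 1 + (u + 2 * Real.pi * |(r 1 : ℝ)|) - 1 - 2 * Real.pi * |(r 1 : ℝ)| = u
    ring
  intro n
  cases n with
  | zero =>
    show (0:ℝ) ≤ Real.log _
    apply Real.log_nonneg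
    linarith
  | succ k =>
    rw [Function.iterate_succ_apply, key]
    exact h k

lemma pull_lt {t u c : ℝ} (hc : 0 ≤ c) (hu : 0 ≤ u) (hlt : u < Real.exp t - 1 - c) :
    Real.log (1 + (u + c)) < t := by
  rw [Real.log_lt_iff_lt_exp (by linarith)]
  linarith

lemma pull_many {r : Addr} {t : ℝ} (ht : (t, r) ∈ JF) :
    ∀ (q : ℕ) (u : ℝ), (u, shift^[q] r) ∈ JF → u < (Fmodel^[q] (t, r)).1 →
      ∃ w, w < t ∧ (w, r) ∈ JF := by
  intro q
  induction q with
  | zero =>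
    intro u hu hlt
    exact ⟨u, by simpa using hlt, hu⟩
  | succ k ih =>
    intro u hu hlt
    have hρ : shift^[k+1] r = shift (shift^[k] r) := Function.iterate_succ_apply' shift k r
    rw [hρ] at hu
    have hcnn : 0 ≤ 2 * Real.pi * |((shift^[k] r) 1 : ℝ)| := by positivity
    have h1 : (Real.log (1 + (u + 2 * Real.pi * |((shift^[k] r) 1 : ℝ)|)), shift^[k] r) ∈ JF :=
      jf_pull hu
    have he : (Fmodel^[k+1] (t, r)).1
        = Real.exp (Fmodel^[k] (t, r)).1 - 1 - 2 * Real.pi * |((shift^[k] r) 1 : ℝ)| := by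
      rw [orbit_fst_succ]
      rw [shift_iter]
    rw [he] at hlt
    have hlog := pull_lt hcnn (jf_fst_nonneg hu) hlt
    exact ih _ h1 hlog

-- ############ the constant K ############

def Kconst (t0 : ℝ) (s : Addr) : ℝ :=
  max 3 (2 * Real.sqrt (t0 + 2 * Real.pi * |(s 0 : ℝ)| + 2 * Real.pi))

lemma Kconst_ge_3 (t0 : ℝ) (s : Addr) : 3 ≤ Kconst t0 s := le_max_left _ _

lemma Kconst_exp (t0 : ℝ) (s : Addr) (ht0 : 0 ≤ t0) :
    Kconst t0 s + (t0 + 2 * Real.pi * |(s 0 : ℝ)| + 2 * Real.pi) ≤ Real.exp (Kconst t0 s) - 1 := by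
  set c : ℝ := t0 + 2 * Real.pi * |(s 0 : ℝ)| + 2 * Real.pi with hc_def
  have hc : 0 ≤ c := by positivity
  set K : ℝ := Kconst t0 s with hK_def
  have hK3 : 3 ≤ K := Kconst_ge_3 t0 s
  have hKc : 2 * Real.sqrt c ≤ K := le_max_right _ _
  have hKsq : 4 * c ≤ K ^ 2 := by
    have h1 : (2 * Real.sqrt c) ^ 2 ≤ K ^ 2 := by
      apply pow_le_pow_left₀ (by positivity) hKc
    have h2 : (2 * Real.sqrt c) ^ 2 = 4 * c := by
      rw [mul_pow, Real.sq_sqrt hc]; norm_num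
    linarith
  have hexp : (1 + K / 2) ^ 2 ≤ Real.exp K := by
    have h1 : 1 + K / 2 ≤ Real.exp (K / 2) := by linarith [Real.add_one_le_exp (K / 2)]
    have h2 : Real.exp K = Real.exp (K / 2) * Real.exp (K / 2) := by
      rw [← Real.exp_add]; ring_nf
    have h3 : (0:ℝ) ≤ 1 + K / 2 := by linarith
    calc (1 + K / 2) ^ 2 ≤ Real.exp (K / 2) ^ 2 := pow_le_pow_left₀ h3 h1 2
      _ = Real.exp K := by rw [h2]; ring
  nlinarith [hexp, hKsq, hK3]

-- ############ dominated forward orbit ############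

lemma jf_dom {t0 : ℝ} {s a : Addr} (hx : (t0, s) ∈ JF) {P : ℕ → ℕ} (hP0 : P 0 = 0)
    (hPs : ∀ n, P (n + 1) = P n + 1 ∨ P (n + 1) = 0)
    (hA : ∀ n, |(a n : ℝ)| ≤ |(s (P n) : ℝ)| + 1) :
    (t0 + Kconst t0 s, a) ∈ JF := by
  have ht0 : 0 ≤ t0 := jf_fst_nonneg hx
  set K : ℝ := Kconst t0 s with hK_def
  have hK3 : 3 ≤ K := Kconst_ge_3 t0 s
  have hKc := Kconst_exp t0 s ht0
  have hπ : 0 < Real.pi := Real.pi_pos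
  have hXnn : ∀ n, 0 ≤ (Fmodel^[n] (t0, s)).1 := hx
  have hXsucc : ∀ n, (Fmodel^[n+1] (t0, s)).1
      = Real.exp (Fmodel^[n] (t0, s)).1 - 1 - 2 * Real.pi * |(s (1 + n) : ℝ)| :=
    fun n => orbit_fst_succ (t0, s) n
  have main : ∀ n, (Fmodel^[P n] (t0, s)).1 + K ≤ (Fmodel^[n] (t0 + K, a)).1 := by
    intro n
    induction n with
    | zero => rw [hP0]; exact le_of_eq rfl
    | succ k ih =>
      have hVsucc : (Fmodel^[k+1] (t0 + K, a)).1
          = Real.exp (Fmodel^[k] (t0 + K, a)).1 - 1 - 2 * Real.pi * |(a (1 + k) : ℝ)| :=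
        orbit_fst_succ (t0 + K, a) k
      have hAk : |(a (1 + k) : ℝ)| ≤ |(s (P (k + 1)) : ℝ)| + 1 := by
        rw [Nat.add_comm 1 k]; exact hA (k + 1)
      have hexpV : Real.exp ((Fmodel^[P k] (t0, s)).1 + K)
          ≤ Real.exp (Fmodel^[k] (t0 + K, a)).1 := Real.exp_le_exp.mpr ih
      rcases hPs k with hinc | hz
      · -- increment case
        rw [hinc]
        have hXs := hXsucc (P k)
        have hx1 : (1:ℝ) ≤ Real.exp (Fmodel^[P k] (t0, s)).1 := Real.one_le_exp (hXnn (P k))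
        have hsplit : Real.exp ((Fmodel^[P k] (t0, s)).1 + K)
            = Real.exp (Fmodel^[P k] (t0, s)).1 * Real.exp K := Real.exp_add _ _
        have hKK : K + 2 * Real.pi ≤ Real.exp K - 1 := by
          have habs : 0 ≤ |(s 0 : ℝ)| := abs_nonneg _
          nlinarith [hKc]
        have hidx : |(s (P (k + 1)) : ℝ)| = |(s (1 + P k) : ℝ)| := by
          rw [hinc, Nat.add_comm 1 (P k)]
        rw [hVsucc]
        have hAk' : |(a (1 + k) : ℝ)| ≤ |(s (1 + P k) : ℝ)| + 1 := by
          rw [Nat.add_comm 1 (P k), ← hinc]; exact hAk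
        rw [hXs]
        nlinarith [hexpV, hsplit, hKK, hx1, hAk', hπ]
      · -- reset case
        rw [hz, hVsucc]
        show (Fmodel^[0] (t0, s)).1 + K ≤ _
        have hexpK : Real.exp K ≤ Real.exp (Fmodel^[k] (t0 + K, a)).1 := by
          apply Real.exp_le_exp.mpr
          have := hXnn (P k); linarith [ih]
        rw [hz] at hAk
        show t0 + K ≤ _
        nlinarith [hexpK, hKc, hAk, hπ]
  intro n
  have h1 := main n
  have h2 := hXnn (P n)
  linarith


-- ############ main argument ############

lemma not_fast_main {s ra rb m : Addr} (hs : ExpBounded s) (hne : ra ≠ rb)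
    (hA : HasItinerary s ra m) (hB : HasItinerary s rb m) : ¬ Fast ra := by
  rintro ⟨_, hJ, hT⟩
  obtain ⟨t0, hx⟩ := hs
  set K : ℝ := Kconst t0 s with hK_def
  have hev : ∀ᶠ n in atTop, t0 + K < (Fmodel^[n] (tmin ra, ra)).1 :=
    hT.eventually_gt_atTop (t0 + K)
  obtain ⟨N, hN⟩ := eventually_atTop.mp hev
  obtain ⟨q, hqN, hq0⟩ := resets_unbounded hA hB hne N
  have hPstrad := Pfun_strad hA hB hq0
  have hbound : ∀ n, |((shift^[q] ra) n : ℝ)| ≤ |(s (Pfun ra rb q n) : ℝ)| + 1 := by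
    intro n
    have h := (strad_entry hA hB (hPstrad n)).1
    have h2 : |ra (q + n)| ≤ |s (Pfun ra rb q n)| + 1 := by
      have h3 := abs_sub_abs_le_abs_sub (ra (q + n)) (s (Pfun ra rb q n))
      linarith
    rw [shift_iter, Nat.add_comm n q]
    exact_mod_cast h2
  have hjf : (t0 + K, shift^[q] ra) ∈ JF := jf_dom hx rfl (Pfun_step ra rb q) hbound
  have hlt : t0 + K < (Fmodel^[q] (tmin ra, ra)).1 := hN q hqN
  obtain ⟨w, hw, hwJ⟩ := pull_many hJ q _ hjf hlt
  have hle : tmin ra ≤ w := csInf_le ⟨0, fun t htJ => jf_fst_nonneg htJ⟩ hwJ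
  linarith

/-- **Addresses sharing an itinerary are slow.** If `s` is exponentially bounded and
`r¹ ≠ r²` have itineraries with respect to `s` that are defined and coincide, then neither
`r¹` nor `r²` is fast. -/
theorem addresses_sharing_itinerary_are_slow (s : Addr) (hs : ExpBounded s)
    (r1 r2 : Addr) (hne : r1 ≠ r2) (m : Addr)
    (h1 : HasItinerary s r1 m) (h2 : HasItinerary s r2 m) :
    ¬ Fast r1 ∧ ¬ Fast r2 := by
  exact ⟨not_fast_main hs hne h1 h2, not_fast_main hs (Ne.symm hne) h2 h1⟩

end
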